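/- Let Φ be a root system in E with a fixed set of positive roots Φ^+, and let T' be a special closed subset of Φ with |T'| = n < |Φ^+|. Then there exists a special closed subset T of Φ with |T| = n + 1 and a root α ∈ T \ (T + T) such that T \ {α} is conjugate to T' under the Weyl group W(Φ). -/

import Mathlib

open scoped RealInnerProductSpace

/-- The reflection determined by a root `α`: `s_α(x) = x - (2(x,α)/(α,α)) α`. -/
noncomputable def reflectRoot {E : Type*} [NormedAddCommGroup E] [InnerProductSpace ℝ E] (α x : E) : E :=
  x - (2 * ⟪x, α⟫ / ⟪α, α⟫) • α

/-- A root system in a finite-dimensional real inner product space. -/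
def IsRootSystem {E : Type*} [NormedAddCommGroup E] [InnerProductSpace ℝ E] (Φ : Set E) : Prop :=
  Φ.Finite ∧ Submodule.span ℝ Φ = ⊤ ∧ (0 : E) ∉ Φ ∧
    (∀ α ∈ Φ, ∀ t : ℝ, t • α ∈ Φ → t • α = α ∨ t • α = -α) ∧
    (∀ α ∈ Φ, ∀ β ∈ Φ, reflectRoot α β ∈ Φ) ∧
    (∀ α ∈ Φ, ∀ β ∈ Φ, ∃ n : ℤ, 2 * ⟪β, α⟫ / ⟪α, α⟫ = (n : ℝ))

/-- `T` is a closed subset of the root system `Φ`. -/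
def IsClosedSub {E : Type*} [AddCommGroup E] (Φ T : Set E) : Prop :=
  T ⊆ Φ ∧ ∀ α ∈ T, ∀ β ∈ T, α + β ∈ Φ → α + β ∈ T

/-- The symmetric part `T^r = {α ∈ T | -α ∈ T}`. -/
def symmPart {E : Type*} [AddCommGroup E] (T : Set E) : Set E := {α ∈ T | -α ∈ T}

/-- The special part `T^u = {α ∈ T | -α ∉ T}`. -/
def specPart {E : Type*} [AddCommGroup E] (T : Set E) : Set E := {α ∈ T | -α ∉ T}

/-- `T + T`: elements of `T` that are sums of two elements of `T`. -/
def sumSet {E : Type*} [AddCommGroup E] (T : Set E) : Set E :=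
  {γ ∈ T | ∃ α ∈ T, ∃ β ∈ T, γ = α + β}

/-- The Weyl group of `Φ`: the subgroup of linear automorphisms of `E` generated by the
reflections in the roots. -/
def weylGroup {E : Type*} [NormedAddCommGroup E] [InnerProductSpace ℝ E] (Φ : Set E) :
    Subgroup (E ≃ₗ[ℝ] E) :=
  Subgroup.closure {w | ∃ α ∈ Φ, ∀ x, w x = reflectRoot α x}

/-- `Φp` is a set of positive roots of `Φ`. -/
def IsPositiveSystem {E : Type*} [NormedAddCommGroup E] [InnerProductSpace ℝ E]
    (Φ Φp : Set E) : Prop :=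
  ∃ f : E →ₗ[ℝ] ℝ, (∀ α ∈ Φ, f α ≠ 0) ∧ Φp = {α ∈ Φ | 0 < f α}

section aux
variable {E : Type*} [NormedAddCommGroup E] [InnerProductSpace ℝ E] {Φ : Set E}

lemma root_ne_zero (hΦ : IsRootSystem Φ) {α : E} (hα : α ∈ Φ) : α ≠ 0 :=
  fun h => hΦ.2.2.1 (h ▸ hα)

lemma root_inner_self_pos (hΦ : IsRootSystem Φ) {α : E} (hα : α ∈ Φ) : 0 < ⟪α, α⟫ :=
  lt_of_le_of_ne real_inner_self_nonneg
    (fun h => (inner_self_ne_zero.2 (root_ne_zero hΦ hα)) h.symm)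

lemma neg_root_mem (hΦ : IsRootSystem Φ) {α : E} (hα : α ∈ Φ) : -α ∈ Φ := by
  have h := hΦ.2.2.2.2.1 α hα α hα
  have hAA := root_inner_self_pos hΦ hα
  have he : reflectRoot α α = -α := by
    unfold reflectRoot
    have h2 : 2 * ⟪α, α⟫ / ⟪α, α⟫ = 2 := by field_simp
    rw [h2]; module
  rwa [he] at h

lemma add_root_mem (hΦ : IsRootSystem Φ) {α β : E} (hα : α ∈ Φ) (hβ : β ∈ Φ)
    (hin : ⟪α, β⟫ < 0) (hne : α + β ≠ 0) : α + β ∈ Φ := by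
  have hα0 := root_ne_zero hΦ hα
  have hβ0 := root_ne_zero hΦ hβ
  have hAA := root_inner_self_pos hΦ hα
  have hBB := root_inner_self_pos hΦ hβ
  -- strict Cauchy-Schwarz
  have hcs : ⟪α, β⟫ ^ 2 < ⟪α, α⟫ * ⟪β, β⟫ := by
    have h1 : ⟪-α, β⟫ < ‖-α‖ * ‖β‖ := by
      rw [inner_lt_norm_mul_iff_real]
      intro hcontra
      have hβα : β = (-(‖β‖ / ‖α‖)) • α := by
        have h2 : ‖β‖ • (-α) = ‖α‖ • β := by simpa using hcontra
        have h4 : ‖α‖ • β = ‖α‖ • ((-(‖β‖ / ‖α‖)) • α) := by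
          rw [smul_smul]
          have h5 : ‖α‖ * -(‖β‖ / ‖α‖) = -‖β‖ := by
            field_simp
          rw [h5, ← h2]
          simp [smul_neg, neg_smul]
        exact smul_right_injective E (norm_ne_zero_iff.2 hα0) h4
      have := hΦ.2.2.2.1 α hα (-(‖β‖ / ‖α‖)) (by rw [← hβα]; exact hβ)
      rw [← hβα] at this
      rcases this with h | h
      · rw [h] at hin; exact absurd hin (not_lt.2 hAA.le)
      · exact hne (by rw [h]; simp)
    have h2 : -⟪α, β⟫ < ‖α‖ * ‖β‖ := by simpa using h1
    have h3 : (0:ℝ) ≤ -⟪α, β⟫ := by linarith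
    have h4 := mul_self_lt_mul_self h3 h2
    calc ⟪α, β⟫ ^ 2 = (-⟪α, β⟫) * (-⟪α, β⟫) := by ring
    _ < (‖α‖ * ‖β‖) * (‖α‖ * ‖β‖) := h4
    _ = ⟪α, α⟫ * ⟪β, β⟫ := by
        rw [real_inner_self_eq_norm_mul_norm, real_inner_self_eq_norm_mul_norm]; ring
  obtain ⟨n, hnn⟩ := hΦ.2.2.2.2.2 α hα β hβ
  obtain ⟨m, hmm⟩ := hΦ.2.2.2.2.2 β hβ α hα
  have hsymm : ⟪β, α⟫ = ⟪α, β⟫ := real_inner_comm α β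
  have hnneg : (n:ℝ) < 0 := by
    rw [← hnn, hsymm]; exact div_neg_of_neg_of_pos (by linarith) hAA
  have hmneg : (m:ℝ) < 0 := by
    rw [← hmm]; exact div_neg_of_neg_of_pos (by linarith) hBB
  have hprod : (n:ℝ) * m < 4 := by
    rw [← hnn, ← hmm, hsymm]
    rw [div_mul_div_comm]
    rw [div_lt_iff₀ (by positivity)]
    nlinarith
  have hn1 : n ≤ -1 := by
    have : n < 0 := by exact_mod_cast hnneg
    omega
  have hm1 : m ≤ -1 := by
    have : m < 0 := by exact_mod_cast hmneg
    omega
  have hprodZ : n * m < 4 := by exact_mod_cast hprod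
  have hcases : n = -1 ∨ m = -1 := by
    by_contra hcon
    push_neg at hcon
    have h1 : n ≤ -2 := by omega
    have h2 : m ≤ -2 := by omega
    nlinarith
  rcases hcases with h | h
  · -- 2⟪β,α⟫/⟪α,α⟫ = -1, reflect α β = β + α
    have hr := hΦ.2.2.2.2.1 α hα β hβ
    unfold reflectRoot at hr
    rw [hnn, h] at hr
    have : β - ((-1 : ℤ) : ℝ) • α = α + β := by
      push_cast
      module
    rwa [this] at hr
  · have hr := hΦ.2.2.2.2.1 β hβ α hα
    unfold reflectRoot at hr
    rw [hmm, h] at hr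
    have : α - ((-1 : ℤ) : ℝ) • β = α + β := by
      push_cast
      module
    rwa [this] at hr


lemma inner_multiset_sum (a : E) (t : Multiset E) :
    ⟪a, t.sum⟫ = (t.map (fun x => ⟪a, x⟫)).sum := by
  induction t using Multiset.induction with
  | empty => simp
  | cons x s ih => simp [inner_add_right, ih]

open Classical in
lemma multiset_sum_ne_zero (hΦ : IsRootSystem Φ) {T : Set E} (hTΦ : T ⊆ Φ)
    (hclosed : ∀ a ∈ T, ∀ b ∈ T, a + b ∈ Φ → a + b ∈ T)
    (hspec : ∀ a ∈ T, -a ∉ T) :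
    ∀ m : Multiset E, (∀ x ∈ m, x ∈ T) → m ≠ 0 → m.sum ≠ 0 := by
  suffices H : ∀ k : ℕ, ∀ m : Multiset E, Multiset.card m = k →
      (∀ x ∈ m, x ∈ T) → m ≠ 0 → m.sum ≠ 0 by
    exact fun m hm h0 => H (Multiset.card m) m rfl hm h0
  intro k
  induction k using Nat.strong_induction_on with
  | _ k IH =>
    intro m hcard hmT hm0 hsum
    obtain ⟨a, ha⟩ := Multiset.exists_mem_of_ne_zero hm0
    have haT : a ∈ T := hmT a ha
    set t := m.erase a with ht
    have hm : m = a ::ₘ t := (Multiset.cons_erase ha).symm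
    rcases eq_or_ne t 0 with h0 | h0
    · rw [hm, h0] at hsum
      simp at hsum
      exact root_ne_zero hΦ (hTΦ haT) hsum
    · rw [hm, Multiset.sum_cons] at hsum
      have htsum : t.sum = -a := eq_neg_of_add_eq_zero_right hsum
      have hinner : ⟪a, t.sum⟫ < 0 := by
        rw [htsum, inner_neg_right]
        exact neg_neg_of_pos (root_inner_self_pos hΦ (hTΦ haT))
      obtain ⟨b, hbt, hab⟩ : ∃ b ∈ t, ⟪a, b⟫ < 0 := by
        by_contra hcon
        push_neg at hcon
        have : (0:ℝ) ≤ ⟪a, t.sum⟫ := by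
          rw [inner_multiset_sum]
          apply Multiset.sum_nonneg
          intro x hx
          obtain ⟨y, hy, rfl⟩ := Multiset.mem_map.1 hx
          exact hcon y hy
        linarith
      have hbT : b ∈ T := hmT b (hm ▸ Multiset.mem_cons_of_mem hbt)
      have hba : b ≠ -a := by
        intro h
        rw [h] at hbT
        exact hspec a haT hbT
      have habne : a + b ≠ 0 := fun h => hba (eq_neg_of_add_eq_zero_right h)
      have hγΦ : a + b ∈ Φ := add_root_mem hΦ (hTΦ haT) (hTΦ hbT) hab habne
      have hγT : a + b ∈ T := hclosed a haT b hbT hγΦ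
      set m' : Multiset E := (a + b) ::ₘ t.erase b with hm'
      have htb : t = b ::ₘ t.erase b := (Multiset.cons_erase hbt).symm
      have hk2 : Multiset.card m' < k := by
        rw [← hcard, hm, hm']
        simp only [Multiset.card_cons]
        conv_rhs => rw [htb]
        simp only [Multiset.card_cons]
        omega
      have hm'T : ∀ x ∈ m', x ∈ T := by
        intro x hx
        rcases Multiset.mem_cons.1 hx with rfl | hx
        · exact hγT
        · exact hmT x (hm ▸ Multiset.mem_cons_of_mem (Multiset.mem_of_mem_erase hx))
      have hm'0 : m' ≠ 0 := Multiset.cons_ne_zero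
      apply IH _ hk2 m' rfl hm'T hm'0
      rw [hm', Multiset.sum_cons]
      have : (t.erase b).sum = -a - b := by
        have h2 : t.sum = b + (t.erase b).sum := by
          conv_lhs => rw [htb]
          rw [Multiset.sum_cons]
        rw [htsum] at h2
        exact eq_sub_of_add_eq' h2.symm
      rw [this]
      abel

open Classical in
lemma no_pos_combination (hΦ : IsRootSystem Φ) {T : Set E} (hTΦ : T ⊆ Φ)
    (hclosed : ∀ a ∈ T, ∀ b ∈ T, a + b ∈ Φ → a + b ∈ T)
    (hspec : ∀ a ∈ T, -a ∉ T) :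
    ¬ ∃ S : Finset E, S.Nonempty ∧ ↑S ⊆ T ∧ ∃ c : E → ℝ,
      (∀ x ∈ S, 0 < c x) ∧ ∑ x ∈ S, c x • x = 0 := by
  intro hex
  have hTfin : T.Finite := hΦ.1.subset hTΦ
  let σ := {S : Finset E // ↑S ⊆ T}
  have hfin : Finite σ := by
    have hmem : ∀ S : σ, S.1 ∈ hTfin.toFinset.powerset := fun S =>
      Finset.mem_powerset.2 (fun x hx => hTfin.mem_toFinset.2 (S.2 hx))
    exact Finite.of_injective
      (fun S : σ => (⟨S.1, hmem S⟩ : {A // A ∈ hTfin.toFinset.powerset}))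
      (fun A B h => Subtype.ext (by simpa using congrArg Subtype.val h))
  let r : σ → σ → Prop := fun S' S => S'.1.card < S.1.card ∨
    (S'.1.card = S.1.card ∧ ∃ m : Multiset E, m ≠ 0 ∧ (∀ x ∈ m, x ∈ T) ∧
      ∑ x ∈ S'.1, x = (∑ x ∈ S.1, x) + m.sum)
  have htrans : ∀ A B C : σ, r A B → r B C → r A C := by
    intro A B C hab hbc
    rcases hab with h1 | ⟨h1, m1, hm1, hm1T, hs1⟩
    · rcases hbc with h2 | ⟨h2, _⟩
      · exact Or.inl (h1.trans h2)
      · exact Or.inl (h2 ▸ h1)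
    · rcases hbc with h2 | ⟨h2, m2, hm2, hm2T, hs2⟩
      · exact Or.inl (h1 ▸ h2)
      · refine Or.inr ⟨h1.trans h2, m1 + m2, by simp [hm1], ?_, ?_⟩
        · intro x hx
          rcases Multiset.mem_add.1 hx with h | h
          exacts [hm1T x h, hm2T x h]
        · rw [hs1, hs2, Multiset.sum_add]
          abel
  have hirr : ∀ A : σ, ¬ r A A := by
    rintro A (h | ⟨-, m, hm0, hmT, hs⟩)
    · exact lt_irrefl _ h
    · exact multiset_sum_ne_zero hΦ hTΦ hclosed hspec m hmT hm0
        (add_eq_left.1 hs.symm)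
  haveI : IsTrans σ r := ⟨htrans⟩
  haveI : IsIrrefl σ r := ⟨fun a => hirr a⟩
  have hwf : WellFounded r := Finite.wellFounded_of_trans_of_irrefl r
  obtain ⟨S0, hne0, hST0, c0, hcpos0, hcsum0⟩ := hex
  let Bad : Set σ := {A | A.1.Nonempty ∧ ∃ c : E → ℝ,
    (∀ x ∈ A.1, 0 < c x) ∧ ∑ x ∈ A.1, c x • x = 0}
  have hBadne : Set.Nonempty Bad := ⟨⟨S0, hST0⟩, hne0, c0, hcpos0, hcsum0⟩
  obtain ⟨A, hABad, hAmin⟩ := hwf.has_min Bad hBadne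
  obtain ⟨hAne, c, hc, hsum⟩ := hABad
  set S := A.1 with hSdef
  have hST : ↑S ⊆ T := A.2
  have hSΦ0 : ∀ x ∈ S, x ≠ 0 := fun x hx => root_ne_zero hΦ (hTΦ (hST hx))
  -- Step 1 : find a pair with negative inner product
  have hpair : ∃ a ∈ S, ∃ b ∈ S, a ≠ b ∧ ⟪a, b⟫ < 0 := by
    by_contra hcon
    push_neg at hcon
    have hterm : ∀ x ∈ S, ∀ y ∈ S, 0 ≤ c y * (c x * ⟪x, y⟫) := by
      intro x hx y hy
      rcases eq_or_ne x y with rfl | hxy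
      · exact mul_nonneg (hc x hx).le (mul_nonneg (hc x hx).le real_inner_self_nonneg)
      · exact mul_nonneg (hc y hy).le (mul_nonneg (hc x hx).le (hcon x hx y hy hxy))
    have hdouble : ∑ x ∈ S, ∑ y ∈ S, c y * (c x * ⟪x, y⟫) = 0 := by
      have h := hsum
      have h2 : ⟪∑ x ∈ S, c x • x, ∑ y ∈ S, c y • y⟫ = (0:ℝ) := by
        rw [h]
        simp
      rw [sum_inner] at h2
      simpa [inner_sum, real_inner_smul_left, real_inner_smul_right] using h2
    obtain ⟨a, haS⟩ := hAne
    have h1 : ∀ x ∈ S, ∑ y ∈ S, c y * (c x * ⟪x, y⟫) = 0 :=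
      (Finset.sum_eq_zero_iff_of_nonneg
        (fun x hx => Finset.sum_nonneg (fun y hy => hterm x hx y hy))).1 hdouble
    have h2 := (Finset.sum_eq_zero_iff_of_nonneg
      (fun y hy => hterm a haS y hy)).1 (h1 a haS) a haS
    have hapos := hc a haS
    have haa : (0:ℝ) < ⟪a, a⟫ := root_inner_self_pos hΦ (hTΦ (hST haS))
    exact (mul_pos hapos (mul_pos hapos haa)).ne' h2
  obtain ⟨a, haS, b, hbS, hab, hinner, hcab⟩ :
      ∃ a ∈ S, ∃ b ∈ S, a ≠ b ∧ ⟪a, b⟫ < 0 ∧ c a ≤ c b := by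
    obtain ⟨a, haS, b, hbS, hab, hinner⟩ := hpair
    rcases le_total (c a) (c b) with h | h
    · exact ⟨a, haS, b, hbS, hab, hinner, h⟩
    · exact ⟨b, hbS, a, haS, hab.symm, by rwa [real_inner_comm], h⟩
  -- Step 2 : the new root γ = a + b
  have hbneg : b ≠ -a := by
    intro h
    rw [h] at hbS
    exact hspec a (hST haS) (hST hbS)
  have habne : a + b ≠ 0 := fun h => hbneg (eq_neg_of_add_eq_zero_right h)
  have hγΦ : a + b ∈ Φ := add_root_mem hΦ (hTΦ (hST haS)) (hTΦ (hST hbS)) hinner habne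
  have hγT : a + b ∈ T := hclosed _ (hST haS) _ (hST hbS) hγΦ
  set γ := a + b with hγ
  have hγa : γ ≠ a := by
    intro h
    exact hSΦ0 b hbS (by rwa [hγ, add_eq_left] at h)
  have hγb : γ ≠ b := by
    intro h
    exact hSΦ0 a haS (by rwa [hγ, add_eq_right] at h)
  -- Step 3 : the new combination
  set mv := c a with hmv
  have hmvpos : 0 < mv := hc a haS
  set c' : E → ℝ := fun x => ((if x ∈ S then c x else 0) + (if x = γ then mv else 0))
      - (if x = a then mv else 0) - (if x = b then mv else 0) with hc'
  set U : Finset E := insert γ S with hU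
  have hSU : S ⊆ U := Finset.subset_insert _ _
  have hγU : γ ∈ U := Finset.mem_insert_self _ _
  have haU : a ∈ U := hSU haS
  have hbU : b ∈ U := hSU hbS
  have h0γ : (0:ℝ) ≤ if γ ∈ S then c γ else 0 := by
    split
    · exact (hc _ ‹_›).le
    · exact le_rfl
  have hc'γ : 0 < c' γ := by
    simp only [hc', if_pos rfl, ite_true, if_neg hγa, if_neg hγb]
    linarith
  have hc'a : c' a = c a - mv := by
    simp only [hc', if_pos rfl, ite_true, if_pos haS, if_neg (Ne.symm hγa), if_neg hab]
    ring
  have hc'b : c' b = c b - mv := by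
    simp only [hc', if_pos rfl, ite_true, if_pos hbS, if_neg (Ne.symm hγb), if_neg (Ne.symm hab)]
    ring
  have hc'other : ∀ x, x ≠ γ → x ≠ a → x ≠ b → c' x = if x ∈ S then c x else 0 := by
    intro x h1 h2 h3
    simp only [hc']
    rw [if_neg h1, if_neg h2, if_neg h3]
    ring
  have hc'nonneg : ∀ x ∈ U, 0 ≤ c' x := by
    intro x hx
    rcases eq_or_ne x γ with rfl | h1
    · exact hc'γ.le
    rcases eq_or_ne x a with rfl | h2
    · rw [hc'a]
      simp [hmv]
    rcases eq_or_ne x b with rfl | h3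
    · rw [hc'b]
      linarith
    · rw [hc'other x h1 h2 h3]
      split
      · exact (hc _ ‹_›).le
      · exact le_rfl
  have hUsum : ∑ x ∈ U, c' x • x = 0 := by
    have e1 : ∑ x ∈ U, (if x ∈ S then c x else 0) • x = 0 := by
      rw [← hsum]
      by_cases hγS : γ ∈ S
      · rw [hU, Finset.insert_eq_self.2 hγS]
        exact Finset.sum_congr rfl (fun x hx => by rw [if_pos hx])
      · rw [hU, Finset.sum_insert hγS, if_neg hγS, zero_smul, zero_add]
        exact Finset.sum_congr rfl (fun x hx => by rw [if_pos hx])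
    have e2 : ∀ d : E, d ∈ U → ∑ x ∈ U, (if x = d then mv else 0) • x = mv • d := by
      intro d hd
      rw [Finset.sum_eq_single d (fun x _ hxd => by rw [if_neg hxd, zero_smul])
        (fun h => absurd hd h)]
      rw [if_pos rfl]
    have expand : ∀ x : E, c' x • x = ((if x ∈ S then c x else 0) • x
        + (if x = γ then mv else 0) • x) - (if x = a then mv else 0) • x
        - (if x = b then mv else 0) • x := by
      intro x
      simp only [hc', sub_smul, add_smul]
    calc ∑ x ∈ U, c' x • x
        = ((∑ x ∈ U, (if x ∈ S then c x else 0) • x)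
          + ∑ x ∈ U, (if x = γ then mv else 0) • x)
          - (∑ x ∈ U, (if x = a then mv else 0) • x)
          - (∑ x ∈ U, (if x = b then mv else 0) • x) := by
          simp only [expand]
          rw [Finset.sum_sub_distrib, Finset.sum_sub_distrib, Finset.sum_add_distrib]
      _ = (0 + mv • γ) - mv • a - mv • b := by rw [e1, e2 γ hγU, e2 a haU, e2 b hbU]
      _ = 0 := by
          rw [hγ, smul_add]
          abel
  set S' : Finset E := U.filter (fun x => 0 < c' x) with hS'
  have hS'sum : ∑ x ∈ S', c' x • x = 0 := by
    rw [← hUsum]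
    apply Finset.sum_filter_of_ne
    intro x hx hfx
    rcases (hc'nonneg x hx).lt_or_eq with h | h
    · exact h
    · exact absurd (by rw [← h, zero_smul]) hfx
  have hS'T : ↑S' ⊆ T := by
    intro x hx
    have hx' : x ∈ U := Finset.mem_filter.1 hx |>.1
    rcases Finset.mem_insert.1 hx' with rfl | h
    · exact hγT
    · exact hST h
  have hS'ne : S'.Nonempty := ⟨γ, Finset.mem_filter.2 ⟨hγU, hc'γ⟩⟩
  have hS'pos : ∀ x ∈ S', 0 < c' x := fun x hx => (Finset.mem_filter.1 hx).2
  have hS'Bad : (⟨S', hS'T⟩ : σ) ∈ Bad := ⟨hS'ne, c', hS'pos, hS'sum⟩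
  -- Step 4 : S' is strictly smaller in the well-founded order
  have hc'a0 : c' a = 0 := by rw [hc'a, hmv, sub_self]
  have haS' : a ∉ S' := by
    intro h
    have := hS'pos a h
    rw [hc'a0] at this
    exact lt_irrefl 0 this
  have hScard : 1 ≤ S.card := Finset.card_pos.2 ⟨a, haS⟩
  have hrel : r ⟨S', hS'T⟩ A := by
    by_cases hγS : γ ∈ S
    · left
      have hsub : S' ⊆ S.erase a := by
        rw [Finset.subset_erase]
        refine ⟨?_, haS'⟩
        intro x hx
        have := (Finset.mem_filter.1 hx).1
        rwa [hU, Finset.insert_eq_self.2 hγS] at this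
      calc S'.card ≤ (S.erase a).card := Finset.card_le_card hsub
        _ < S.card := Finset.card_erase_lt_of_mem haS
    · have hUcard : U.card = S.card + 1 := Finset.card_insert_of_notMem hγS
      by_cases hcab' : c a = c b
      · left
        have hc'b0 : c' b = 0 := by rw [hc'b, hmv, hcab', sub_self]
        have hbS' : b ∉ S' := by
          intro h
          have := hS'pos b h
          rw [hc'b0] at this
          exact lt_irrefl 0 this
        have hsub : S' ⊆ (U.erase a).erase b := by
          rw [Finset.subset_erase, Finset.subset_erase]
          exact ⟨⟨Finset.filter_subset _ _, haS'⟩, hbS'⟩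
        have hbUa : b ∈ U.erase a := Finset.mem_erase.2 ⟨fun h => hab h.symm, hbU⟩
        have hle := Finset.card_le_card hsub
        rw [Finset.card_erase_of_mem hbUa, Finset.card_erase_of_mem haU, hUcard] at hle
        show S'.card < S.card
        omega
      · right
        have hmvb : mv < c b := lt_of_le_of_ne hcab hcab'
        have hS'eq : S' = insert γ (S.erase a) := by
          ext x
          simp only [hS', Finset.mem_filter, hU, Finset.mem_insert, Finset.mem_erase]
          constructor
          · rintro ⟨hx | hxS, hpos⟩
            · exact Or.inl hx
            · refine Or.inr ⟨?_, hxS⟩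
              intro hxa
              rw [hxa, hc'a0] at hpos
              exact lt_irrefl _ hpos
          · rintro (rfl | ⟨hxa, hxS⟩)
            · exact ⟨Or.inl rfl, hc'γ⟩
            · refine ⟨Or.inr hxS, ?_⟩
              rcases eq_or_ne x γ with rfl | h1
              · exact hc'γ
              rcases eq_or_ne x b with rfl | h3
              · rw [hc'b]
                linarith
              · rw [hc'other x h1 hxa h3, if_pos hxS]
                exact hc x hxS
        have hγSe : γ ∉ S.erase a := fun h => hγS (Finset.mem_of_mem_erase h)
        constructor
        · show S'.card = S.card
          rw [hS'eq, Finset.card_insert_of_notMem hγSe, Finset.card_erase_of_mem haS]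
          omega
        · refine ⟨{b}, by simp, ?_, ?_⟩
          · intro x hx
            rw [Multiset.mem_singleton.1 hx]
            exact hST hbS
          · have herase : ∑ x ∈ S.erase a, x = (∑ x ∈ S, x) - a := by
              have h := Finset.sum_erase_add S (fun x => x) haS
              exact eq_sub_of_add_eq h
            show ∑ x ∈ S', x = (∑ x ∈ S, x) + ({b} : Multiset E).sum
            rw [hS'eq, Finset.sum_insert hγSe, herase, Multiset.sum_singleton, hγ]
            abel
  exact hAmin ⟨S', hS'T⟩ hS'Bad hrel

open Classical in
lemma exists_pos_functional (hΦ : IsRootSystem Φ) {T : Set E} (hTΦ : T ⊆ Φ)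
    (hclosed : ∀ a ∈ T, ∀ b ∈ T, a + b ∈ Φ → a + b ∈ T)
    (hspec : ∀ a ∈ T, -a ∉ T) :
    ∃ f : E →L[ℝ] ℝ, ∀ x ∈ T, 0 < f x := by
  have hTfin : T.Finite := hΦ.1.subset hTΦ
  have h0 : (0:E) ∉ convexHull ℝ T := by
    intro h0
    rw [hTfin.convexHull_eq] at h0
    obtain ⟨w, hw0, hw1, hwc⟩ := h0
    have hs : ∑ y ∈ hTfin.toFinset, w y • y = 0 := by
      rw [Finset.centerMass_eq_of_sum_1 _ _ hw1] at hwc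
      simpa using hwc
    apply no_pos_combination hΦ hTΦ hclosed hspec
    set F := hTfin.toFinset with hF
    set S := F.filter (fun y => 0 < w y) with hS
    refine ⟨S, ?_, ?_, w, fun x hx => (Finset.mem_filter.1 hx).2, ?_⟩
    · by_contra hemp
      rw [Finset.not_nonempty_iff_eq_empty] at hemp
      have hz : ∑ y ∈ F, w y = 0 := by
        apply Finset.sum_eq_zero
        intro y hy
        rcases (hw0 y (hTfin.mem_toFinset.1 hy)).lt_or_eq with h | h
        · exact absurd (Finset.mem_filter.2 ⟨hy, h⟩) (by rw [← hS, hemp]; simp)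
        · exact h.symm
      rw [hw1] at hz
      exact one_ne_zero hz
    · intro x hx
      exact hTfin.mem_toFinset.1 (Finset.mem_filter.1 (Finset.mem_coe.1 hx)).1
    · rw [← hs]
      apply Finset.sum_filter_of_ne
      intro y hy hne
      have hwy : w y ≠ 0 := fun h => hne (by rw [h, zero_smul])
      exact (hw0 y (hTfin.mem_toFinset.1 hy)).lt_of_ne (Ne.symm hwy)
  obtain ⟨f, u, hu0, hub⟩ := geometric_hahn_banach_point_closed
    (convex_convexHull ℝ T) (hTfin.isClosed_convexHull ℝ) h0
  refine ⟨f, fun x hx => ?_⟩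
  have hu : 0 < u := by simpa using hu0
  exact lt_trans hu (hub x (subset_convexHull ℝ T hx))

lemma half_count (hΦ : IsRootSystem Φ) (g : E → ℝ) (hg : ∀ γ ∈ Φ, g γ ≠ 0)
    (hgneg : ∀ x, g (-x) = - g x) :
    {γ ∈ Φ | 0 < g γ}.ncard + {γ ∈ Φ | 0 < g γ}.ncard = Φ.ncard := by
  set A := {γ ∈ Φ | 0 < g γ} with hA
  have hAsub : A ⊆ Φ := fun x hx => hx.1
  have himg : (fun x : E => -x) '' A = Φ \ A := by
    ext x
    constructor
    · rintro ⟨y, ⟨hyΦ, hy⟩, rfl⟩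
      refine ⟨neg_root_mem hΦ hyΦ, ?_⟩
      intro hmem
      have h2 := hmem.2
      rw [hgneg] at h2
      linarith
    · rintro ⟨hxΦ, hxA⟩
      refine ⟨-x, ⟨neg_root_mem hΦ hxΦ, ?_⟩, by simp⟩
      rw [hgneg]
      rcases (hg x hxΦ).lt_or_gt with h | h
      · linarith
      · exact absurd ⟨hxΦ, h⟩ hxA
  have h1 : A.ncard = (Φ \ A).ncard := by
    rw [← himg, Set.ncard_image_of_injective _ neg_injective]
  have h2 : (Φ \ A).ncard + A.ncard = Φ.ncard :=
    Set.ncard_diff_add_ncard_of_subset hAsub hΦ.1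
  omega

end aux

/-- Every special closed subset of cardinality `n < |Φ⁺|` arises as a
successor of a special closed subset of cardinality `n + 1`. -/
theorem exists_predecessor_special_closed {E : Type*} [NormedAddCommGroup E]
    [InnerProductSpace ℝ E] [FiniteDimensional ℝ E] (Φ Φp T' : Set E)
    (hΦ : IsRootSystem Φ) (hΦp : IsPositiveSystem Φ Φp)
    (hT' : IsClosedSub Φ T') (hspec : ∀ α ∈ T', -α ∉ T')
    (n : ℕ) (hn : T'.ncard = n) (hlt : n < Φp.ncard) :
    ∃ T : Set E, IsClosedSub Φ T ∧ (∀ α ∈ T, -α ∉ T) ∧ T.ncard = n + 1 ∧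
      ∃ α ∈ T \ sumSet T, ∃ w ∈ weylGroup Φ, ⇑w '' (T \ {α}) = T' := by
  obtain ⟨hT'Φ, hT'closed⟩ := hT'
  obtain ⟨f₁, hf₁, hΦpeq⟩ := hΦp
  have hΦfin := hΦ.1
  have hT'fin : T'.Finite := hΦfin.subset hT'Φ
  obtain ⟨f₀, hf₀⟩ := exists_pos_functional hΦ hT'Φ hT'closed hspec
  -- choose the perturbation parameter ε
  set B : Set ℝ := (fun γ => -(f₀ γ) / f₁ γ) '' Φ with hB
  have hBfin : B.Finite := hΦfin.image _
  have hδ : ∃ δ : ℝ, 0 < δ ∧ ∀ x ∈ T', δ * (|f₁ x| + 1) ≤ f₀ x := by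
    rcases hT'fin.toFinset.eq_empty_or_nonempty with h | h
    · exact ⟨1, one_pos, fun x hx => absurd (hT'fin.mem_toFinset.2 hx) (by rw [h]; simp)⟩
    · obtain ⟨x0, hx0, hmin⟩ := Finset.exists_min_image hT'fin.toFinset
        (fun x => f₀ x / (|f₁ x| + 1)) h
      have hx0T : x0 ∈ T' := hT'fin.mem_toFinset.1 hx0
      have hpos0 : 0 < f₀ x0 := hf₀ x0 hx0T
      have hden0 : (0:ℝ) < |f₁ x0| + 1 := by positivity
      refine ⟨f₀ x0 / (|f₁ x0| + 1), by positivity, fun x hx => ?_⟩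
      have hden : (0:ℝ) < |f₁ x| + 1 := by positivity
      have := hmin x (hT'fin.mem_toFinset.2 hx)
      rw [← le_div_iff₀ hden]
      exact le_trans this (le_refl _)
  obtain ⟨δ, hδpos, hδle⟩ := hδ
  have hεex : ((Set.Ioo (0:ℝ) δ) \ B).Nonempty :=
    ((Set.Ioo_infinite hδpos).diff hBfin).nonempty
  obtain ⟨ε, hεI, hεB⟩ := hεex
  have hε0 : 0 < ε := hεI.1
  have hεδ : ε < δ := hεI.2
  set f : E → ℝ := fun x => f₀ x + ε * f₁ x with hf
  have hfadd : ∀ x y, f (x + y) = f x + f y := by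
    intro x y
    simp only [hf, map_add]
    ring
  have hfneg : ∀ x, f (-x) = - f x := by
    intro x
    simp only [hf, map_neg]
    ring
  have hfΦ : ∀ γ ∈ Φ, f γ ≠ 0 := by
    intro γ hγ hzero
    apply hεB
    refine ⟨γ, hγ, ?_⟩
    rw [div_eq_iff (hf₁ γ hγ)]
    simp only [hf] at hzero
    linarith
  have hfT' : ∀ x ∈ T', 0 < f x := by
    intro x hx
    have h2 := hδle x hx
    have h3 : ε * |f₁ x| < δ * (|f₁ x| + 1) := by
      have h4 : (0:ℝ) ≤ |f₁ x| := abs_nonneg _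
      nlinarith
    have h5 : -(ε * |f₁ x|) ≤ ε * f₁ x := by
      have := neg_abs_le (f₁ x)
      nlinarith
    simp only [hf]
    linarith
  set Ψ : Set E := {γ ∈ Φ | 0 < f γ} with hΨ
  have hcardΨ : Ψ.ncard = Φp.ncard := by
    have hA := half_count hΦ f hfΦ hfneg
    have hB2 := half_count hΦ f₁ hf₁ (fun x => by simp)
    rw [← hΨ] at hA
    have hPp : Φp.ncard = {γ ∈ Φ | 0 < f₁ γ}.ncard := by rw [hΦpeq]
    omega
  have hTΨ : T' ⊆ Ψ := fun x hx => ⟨hT'Φ hx, hfT' x hx⟩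
  have hΨfin : Ψ.Finite := hΦfin.subset (fun x hx => hx.1)
  have hGfin : (Ψ \ T').Finite := hΨfin.diff
  have hex : (Ψ \ T').Nonempty := by
    by_contra h
    rw [Set.not_nonempty_iff_eq_empty, Set.diff_eq_empty] at h
    have := Set.ncard_le_ncard h hT'fin
    omega
  obtain ⟨α, hαG, hαmax⟩ := Finset.exists_max_image hGfin.toFinset f
    ⟨hex.choose, hGfin.mem_toFinset.2 hex.choose_spec⟩
  have hαmem : α ∈ Ψ \ T' := hGfin.mem_toFinset.1 hαG
  have hαΨ : α ∈ Ψ := hαmem.1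
  have hαT' : α ∉ T' := hαmem.2
  have hαΦ : α ∈ Φ := hαΨ.1
  have hfα : 0 < f α := hαΨ.2
  set T : Set E := insert α T' with hT
  have h2α : α + α ∉ Φ := by
    intro h
    have h2 : (2:ℝ) • α ∈ Φ := by rwa [two_smul]
    have hαne := root_ne_zero hΦ hαΦ
    rcases hΦ.2.2.2.1 α hαΦ 2 h2 with h3 | h3
    · have h4 : (2 - 1 : ℝ) • α = 0 := by rw [sub_smul, one_smul, h3, sub_self]
      apply hαne
      rcases smul_eq_zero.1 h4 with h5 | h5
      · norm_num at h5
      · exact h5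
    · have h4 : (2 + 1 : ℝ) • α = 0 := by rw [add_smul, one_smul, h3, neg_add_cancel]
      apply hαne
      rcases smul_eq_zero.1 h4 with h5 | h5
      · norm_num at h5
      · exact h5
  have hmaxprop : ∀ y ∈ T', α + y ∈ Φ → α + y ∈ T' := by
    intro y hy hsumΦ
    by_contra hnot
    have hfy : 0 < f y := hfT' y hy
    have hsumΨ : α + y ∈ Ψ := ⟨hsumΦ, by rw [hfadd]; linarith⟩
    have hmemG : α + y ∈ hGfin.toFinset := hGfin.mem_toFinset.2 ⟨hsumΨ, hnot⟩
    have := hαmax _ hmemG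
    rw [hfadd] at this
    linarith
  have hTpos : ∀ x ∈ T, 0 < f x := by
    rintro x hx
    rcases Set.mem_insert_iff.1 hx with rfl | hx'
    · exact hfα
    · exact hfT' x hx'
  have hTclosed : IsClosedSub Φ T := by
    constructor
    · rintro x hx
      rcases Set.mem_insert_iff.1 hx with rfl | hx'
      · exact hαΦ
      · exact hT'Φ hx'
    · intro x hx y hy hsumΦ
      rcases Set.mem_insert_iff.1 hx with rfl | hx' <;>
        rcases Set.mem_insert_iff.1 hy with rfl | hy'
      · exact absurd hsumΦ h2α
      · exact Set.mem_insert_iff.2 (Or.inr (hmaxprop y hy' hsumΦ))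
      · rw [add_comm] at hsumΦ ⊢
        exact Set.mem_insert_iff.2 (Or.inr (hmaxprop x hx' hsumΦ))
      · exact Set.mem_insert_iff.2 (Or.inr (hT'closed x hx' y hy' hsumΦ))
  have hTspec : ∀ x ∈ T, -x ∉ T := by
    intro x hx hnx
    have h1 := hTpos x hx
    have h2 := hTpos _ hnx
    rw [hfneg] at h2
    linarith
  refine ⟨T, hTclosed, hTspec, ?_, α, ⟨Set.mem_insert _ _, ?_⟩, 1, one_mem _, ?_⟩
  · rw [hT, Set.ncard_insert_of_notMem hαT' hT'fin, hn]
  · rintro ⟨hαT, x, hxT, y, hyT, hxy⟩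
    have hfx := hTpos x hxT
    have hfy := hTpos y hyT
    have hfeq : f α = f x + f y := by rw [hxy, hfadd]
    rcases Set.mem_insert_iff.1 hxT with rfl | hxT'
    · linarith
    rcases Set.mem_insert_iff.1 hyT with rfl | hyT'
    · linarith
    · have hαT'' : x + y ∈ T' := hT'closed x hxT' y hyT' (by rw [← hxy]; exact hαΦ)
      rw [← hxy] at hαT''
      exact hαT' hαT''
  · have h1 : T \ {α} = T' := by
      rw [hT]
      exact Set.insert_diff_self_of_notMem hαT'
    rw [h1]
    have h2 : ⇑(1 : E ≃ₗ[ℝ] E) = id := rfl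
    rw [h2, Set.image_id]
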